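/- Let U ⊆ ℂ be open and let ψ be holomorphic on U with nowhere vanishing derivative. Define gₙ : U → ℂ recursively by g₁ = ψ''/ψ' and g_{n+1} = deriv gₙ, and set dₙ(z,y) = yⁿ·gₙ(z) on U × ℂ. Then for every n ≥ 1: (Y dₙ)(z,y) = n·dₙ(z,y) and (X dₙ)(z,y) = d_{n+1}(z,y) for all (z,y) ∈ U × ℂ. (These realize the Hopf-algebra commutation relations [Y,δₙ] = nδₙ and [X,δₙ] = δ_{n+1}.) -/

import Mathlib

/-- First-variable Wirtinger derivative ∂₁F(p) = ½(DF(p)(e₁) − i·DF(p)(i·e₁)) for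
F : ℂ × ℂ → ℂ, where DF(p) is the real Fréchet derivative of F at p. -/
noncomputable def wirt1 (F : ℂ × ℂ → ℂ) (p : ℂ × ℂ) : ℂ :=
  (1 / 2 : ℂ) * (fderiv ℝ F p (1, 0) - Complex.I * fderiv ℝ F p (Complex.I, 0))

/-- Second-variable Wirtinger derivative ∂₂F(p) = ½(DF(p)(e₂) − i·DF(p)(i·e₂)). -/
noncomputable def wirt2 (F : ℂ × ℂ → ℂ) (p : ℂ × ℂ) : ℂ :=
  (1 / 2 : ℂ) * (fderiv ℝ F p (0, 1) - Complex.I * fderiv ℝ F p (0, Complex.I))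

/-- The operator (X F)(z,y) = y·∂₁F(z,y). -/
noncomputable def Xop (F : ℂ × ℂ → ℂ) : ℂ × ℂ → ℂ := fun p => p.2 * wirt1 F p

/-- The operator (Y F)(z,y) = y·∂₂F(z,y). -/
noncomputable def Yop (F : ℂ × ℂ → ℂ) : ℂ × ℂ → ℂ := fun p => p.2 * wirt2 F p


lemma key (U : Set ℂ) (hU : IsOpen U) (g : ℂ → ℂ) (hg : DifferentiableAt ℂ g z)
    (n : ℕ) (y : ℂ) :
    wirt1 (fun p : ℂ × ℂ => p.2 ^ n * g p.1) (z, y) = y ^ n * deriv g z ∧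
    wirt2 (fun p : ℂ × ℂ => p.2 ^ n * g p.1) (z, y) = (n : ℂ) * y ^ (n - 1) * g z := by
  have h1 : HasFDerivAt (fun p : ℂ × ℂ => g p.1)
      ((ContinuousLinearMap.smulRight (1 : ℂ →L[ℂ] ℂ) (deriv g z)).comp
        (ContinuousLinearMap.fst ℂ ℂ ℂ)) (z, y) :=
    (hg.hasDerivAt.hasFDerivAt).comp (z, y) hasFDerivAt_fst
  have h2 : HasFDerivAt (fun p : ℂ × ℂ => p.2 ^ n)
      ((ContinuousLinearMap.smulRight (1 : ℂ →L[ℂ] ℂ) ((n : ℂ) * y ^ (n - 1))).comp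
        (ContinuousLinearMap.snd ℂ ℂ ℂ)) (z, y) :=
    ((hasDerivAt_pow n y).hasFDerivAt).comp (z, y) hasFDerivAt_snd
  have h := h2.mul h1
  have hR := (h.restrictScalars ℝ).fderiv
  rw [show ((fun p : ℂ × ℂ => p.2 ^ n) * fun p => g p.1) = fun p => p.2 ^ n * g p.1 from rfl] at hR
  have hI : Complex.I ^ 2 = -1 := Complex.I_sq
  constructor
  · simp only [wirt1, hR]
    simp [ContinuousLinearMap.smulRight_apply]
    linear_combination (-(1/2) * y ^ n * deriv g z) * hI
  · simp only [wirt2, hR]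
    simp [ContinuousLinearMap.smulRight_apply]
    linear_combination (-(1/2) * (n : ℂ) * y ^ (n - 1) * g z) * hI
/-- For ψ holomorphic with nowhere vanishing derivative on the open set U, with
gₙ = deriv^[n-1] (ψ''/ψ') and dₙ(z,y) = yⁿ·gₙ(z), one has for every n ≥ 1 and every
(z,y) ∈ U × ℂ: (Y dₙ)(z,y) = n·dₙ(z,y) and (X dₙ)(z,y) = d_{n+1}(z,y). -/
theorem stmt3 (U : Set ℂ) (hU : IsOpen U) (ψ : ℂ → ℂ)
    (hψ : DifferentiableOn ℂ ψ U) (hne : ∀ z ∈ U, deriv ψ z ≠ 0) :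
    ∀ n : ℕ, 1 ≤ n → ∀ z ∈ U, ∀ y : ℂ,
      Yop (fun p : ℂ × ℂ =>
          p.2 ^ n * (deriv^[n - 1] fun w => deriv (deriv ψ) w / deriv ψ w) p.1) (z, y)
        = (n : ℂ) * (y ^ n * (deriv^[n - 1] fun w => deriv (deriv ψ) w / deriv ψ w) z) ∧
      Xop (fun p : ℂ × ℂ =>
          p.2 ^ n * (deriv^[n - 1] fun w => deriv (deriv ψ) w / deriv ψ w) p.1) (z, y)
        = y ^ (n + 1) * (deriv^[n] fun w => deriv (deriv ψ) w / deriv ψ w) z := by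
  intro n hn z hz y
  set f : ℂ → ℂ := fun w => deriv (deriv ψ) w / deriv ψ w with hf
  have hψa : AnalyticOnNhd ℂ ψ U := hψ.analyticOnNhd hU
  have hfa : AnalyticOnNhd ℂ f U :=
    ((hψa.deriv.deriv).div hψa.deriv hne)
  have hg : AnalyticOnNhd ℂ (deriv^[n - 1] f) U := hfa.iterated_deriv (n - 1)
  have hgd : DifferentiableAt ℂ (deriv^[n - 1] f) z := (hg z hz).differentiableAt
  obtain ⟨hw1, hw2⟩ := key U hU (deriv^[n - 1] f) hgd n y
  have hiter : deriv (deriv^[n - 1] f) = deriv^[n] f := by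
    conv_rhs => rw [show n = (n - 1) + 1 by omega]
    rw [Function.iterate_succ_apply']
  constructor
  · simp only [Yop, hw2]
    have : y * y ^ (n - 1) = y ^ n := by
      rw [← pow_succ']; congr 1; omega
    ring_nf
    rw [this]
  · simp only [Xop, hw1, hiter]
    ring
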